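/- arXiv:1604.01128 — 5 statements merged into one kernel-verified Lean document; each statement's English description precedes it below -/
import Mathlib

section
/- The function φ1 is three times continuously differentiable on [0,L] and satisfies the boundary value problem: φ1'(x) + φ1'''(x) = -q·φ2(x) for all x ∈ [0,L], together with the boundary conditions φ1(0) = φ1(L) = 0 and φ1'(0) = φ1'(L) = 0. -/
noncomputable def L : ℝ := 2 * Real.pi * Real.sqrt (7 / 3)

noncomputable def q : ℝ := 20 / (21 * Real.sqrt 21)

noncomputable def Θ : ℝ := (1 / Real.sqrt (14 * Real.pi)) * (3 / 7 : ℝ) ^ ((1 : ℝ) / 4)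

noncomputable def φ1 (x : ℝ) : ℝ :=
  Θ * (Real.cos (5 * x / Real.sqrt 21) - 3 * Real.cos (x / Real.sqrt 21)
      + 2 * Real.cos (4 * x / Real.sqrt 21))

noncomputable def φ2 (x : ℝ) : ℝ :=
  Θ * (-Real.sin (5 * x / Real.sqrt 21) - 3 * Real.sin (x / Real.sqrt 21)
      + 2 * Real.sin (4 * x / Real.sqrt 21))

noncomputable def s : ℝ := Real.sqrt 21

lemma s_pos : 0 < s := Real.sqrt_pos.mpr (by norm_num)
lemma s_ne : s ≠ 0 := ne_of_gt s_pos
lemma s_sq : s * s = 21 := Real.mul_self_sqrt (by norm_num)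

noncomputable def D1 (x : ℝ) : ℝ :=
  Θ * (-(5 / s) * Real.sin (5 * x / s) + (3 / s) * Real.sin (x / s)
      - (8 / s) * Real.sin (4 * x / s))

noncomputable def D2 (x : ℝ) : ℝ :=
  Θ * (-(25 / 21) * Real.cos (5 * x / s) + (3 / 21) * Real.cos (x / s)
      - (32 / 21) * Real.cos (4 * x / s))

noncomputable def D3 (x : ℝ) : ℝ :=
  Θ * ((125 / (21 * s)) * Real.sin (5 * x / s) - (3 / (21 * s)) * Real.sin (x / s)
      + (128 / (21 * s)) * Real.sin (4 * x / s))

lemma hlin (k x : ℝ) : HasDerivAt (fun y => k * y / s) (k / s) x := by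
  simpa using ((hasDerivAt_id x).const_mul k).div_const s

lemma hlin' (x : ℝ) : HasDerivAt (fun y => y / s) (1 / s) x := by
  simpa using (hasDerivAt_id x).div_const s

lemma hd1 (x : ℝ) : HasDerivAt φ1 (D1 x) x := by
  have h5 := (hlin 5 x).cos
  have h1 := (hlin' x).cos
  have h4 := (hlin 4 x).cos
  have := (((h5.sub (h1.const_mul 3)).add (h4.const_mul 2)).const_mul Θ)
  refine HasDerivAt.congr_deriv this (Eq.symm ?_)
  unfold D1; ring

lemma hd2 (x : ℝ) : HasDerivAt D1 (D2 x) x := by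
  have h5 := ((hlin 5 x).sin.const_mul (-(5 / s)))
  have h1 := ((hlin' x).sin.const_mul (3 / s))
  have h4 := ((hlin 4 x).sin.const_mul (8 / s))
  have := (((h5.add h1).sub h4).const_mul Θ)
  refine HasDerivAt.congr_deriv this (Eq.symm ?_)
  have hs := s_ne
  have hdiv : ∀ a : ℝ, a / s = a * s / 21 := by
    intro a; field_simp; linear_combination (-a) * s_sq
  unfold D2
  rw [hdiv 5, hdiv 3, hdiv 1, hdiv 8, hdiv 4]
  linear_combination (Θ * (25 * Real.cos (5 * x / s) - 3 * Real.cos (x / s)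
      + 32 * Real.cos (4 * x / s)) / 441) * s_sq

lemma hd3 (x : ℝ) : HasDerivAt D2 (D3 x) x := by
  have h5 := ((hlin 5 x).cos.const_mul (-(25 / 21)))
  have h1 := ((hlin' x).cos.const_mul ((3 : ℝ) / 21))
  have h4 := ((hlin 4 x).cos.const_mul (32 / 21))
  have := (((h5.add h1).sub h4).const_mul Θ)
  refine HasDerivAt.congr_deriv this (Eq.symm ?_)
  unfold D3
  ring

lemma deriv_phi1 : deriv φ1 = D1 := funext fun x => (hd1 x).deriv
lemma deriv_D1 : deriv D1 = D2 := funext fun x => (hd2 x).deriv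
lemma deriv_D2 : deriv D2 = D3 := funext fun x => (hd3 x).deriv

/-- φ1 is C³ on [0,L] and satisfies φ1' + φ1''' = -q·φ2 on [0,L],
with boundary conditions φ1(0) = φ1(L) = 0 and φ1'(0) = φ1'(L) = 0. -/
theorem stmt_0 :
    ContDiffOn ℝ 3 φ1 (Set.Icc 0 L) ∧
    (∀ x ∈ Set.Icc (0 : ℝ) L, deriv φ1 x + iteratedDeriv 3 φ1 x = -q * φ2 x) ∧
    φ1 0 = 0 ∧ φ1 L = 0 ∧ deriv φ1 0 = 0 ∧ deriv φ1 L = 0 := by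
  have hit3 : iteratedDeriv 3 φ1 = D3 := by
    rw [show (3:ℕ) = 2+1 from rfl, iteratedDeriv_succ, show (2:ℕ) = 1+1 from rfl,
      iteratedDeriv_succ, iteratedDeriv_one, deriv_phi1, deriv_D1, deriv_D2]
  have hs : Real.sqrt 21 ≠ 0 := s_ne
  have hL : L / Real.sqrt 21 = 2 * Real.pi / 3 := by
    have h73 : Real.sqrt (7/3) / Real.sqrt 21 = 1/3 := by
      rw [← Real.sqrt_div (by norm_num) 21, show (7:ℝ)/3/21 = (1/3)^2 by norm_num,
        Real.sqrt_sq (by norm_num)]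
    unfold L; rw [mul_div_assoc, h73]; ring
  have c1 : Real.cos (2*Real.pi/3) = -(1/2) := by
    rw [show 2*Real.pi/3 = Real.pi - Real.pi/3 by ring, Real.cos_pi_sub, Real.cos_pi_div_three]
  have c4 : Real.cos (4*(2*Real.pi/3)) = -(1/2) := by
    rw [show 4*(2*Real.pi/3) = 2*Real.pi/3 + 2*Real.pi by ring, Real.cos_add_two_pi, c1]
  have c5 : Real.cos (5*(2*Real.pi/3)) = -(1/2) := by
    rw [show 5*(2*Real.pi/3) = (Real.pi/3 + Real.pi) + 2*Real.pi by ring,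
      Real.cos_add_two_pi, Real.cos_add_pi, Real.cos_pi_div_three]
  have s1 : Real.sin (2*Real.pi/3) = Real.sqrt 3/2 := by
    rw [show 2*Real.pi/3 = Real.pi - Real.pi/3 by ring, Real.sin_pi_sub, Real.sin_pi_div_three]
  have s4 : Real.sin (4*(2*Real.pi/3)) = Real.sqrt 3/2 := by
    rw [show 4*(2*Real.pi/3) = 2*Real.pi/3 + 2*Real.pi by ring, Real.sin_add_two_pi, s1]
  have s5 : Real.sin (5*(2*Real.pi/3)) = -(Real.sqrt 3/2) := by
    rw [show 5*(2*Real.pi/3) = (Real.pi/3 + Real.pi) + 2*Real.pi by ring,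
      Real.sin_add_two_pi, Real.sin_add_pi, Real.sin_pi_div_three]
  refine ⟨?_, ?_, ?_, ?_, ?_, ?_⟩
  · have h5 : ContDiff ℝ 3 (fun x : ℝ => Real.cos (5 * x / Real.sqrt 21)) :=
      Real.contDiff_cos.comp ((contDiff_const.mul contDiff_id).div_const _)
    have h1 : ContDiff ℝ 3 (fun x : ℝ => Real.cos (x / Real.sqrt 21)) :=
      Real.contDiff_cos.comp (contDiff_id.div_const _)
    have h4 : ContDiff ℝ 3 (fun x : ℝ => Real.cos (4 * x / Real.sqrt 21)) :=
      Real.contDiff_cos.comp ((contDiff_const.mul contDiff_id).div_const _)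
    have : ContDiff ℝ 3 φ1 := by
      unfold φ1
      exact contDiff_const.mul ((h5.sub (contDiff_const.mul h1)).add (contDiff_const.mul h4))
    exact this.contDiffOn
  · intro x _
    rw [deriv_phi1, hit3]
    unfold D1 D3 q φ2 s
    field_simp
    ring
  · unfold φ1; norm_num
  · unfold φ1
    rw [show 5*L/Real.sqrt 21 = 5*(L/Real.sqrt 21) by ring,
      show 4*L/Real.sqrt 21 = 4*(L/Real.sqrt 21) by ring, hL, c5, c4, c1]
    ring
  · rw [deriv_phi1]; unfold D1 s; norm_num
  · rw [deriv_phi1]; unfold D1 s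
    rw [show 5*L/Real.sqrt 21 = 5*(L/Real.sqrt 21) by ring,
      show 4*L/Real.sqrt 21 = 4*(L/Real.sqrt 21) by ring, hL, s5, s4, s1]
    ring
end

section
/- The function φ2 is three times continuously differentiable on [0,L] and satisfies the boundary value problem: φ2'(x) + φ2'''(x) = q·φ1(x) for all x ∈ [0,L], together with the boundary conditions φ2(0) = φ2(L) = 0 and φ2'(0) = φ2'(L) = 0. -/
namespace Stmt1Aux

noncomputable def c : ℝ := Real.sqrt 21

lemma hc0 : c ≠ 0 := by
  simp only [c]
  positivity

lemma hc2 : c ^ 2 = 21 := by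
  simp only [c]
  rw [sq]
  exact Real.mul_self_sqrt (by norm_num)

lemma hasDerivAt_sin_k (k x : ℝ) :
    HasDerivAt (fun y => Real.sin (k * y / c)) (k / c * Real.cos (k * x / c)) x := by
  have h : HasDerivAt (fun y : ℝ => k * y / c) (k / c) x := by
    simpa using ((hasDerivAt_id x).const_mul k).div_const c
  simpa [mul_comm, Function.comp_def] using (Real.hasDerivAt_sin (k * x / c)).comp x h

lemma hasDerivAt_cos_k (k x : ℝ) :
    HasDerivAt (fun y => Real.cos (k * y / c)) (-(k / c * Real.sin (k * x / c))) x := by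
  have h : HasDerivAt (fun y : ℝ => k * y / c) (k / c) x := by
    simpa using ((hasDerivAt_id x).const_mul k).div_const c
  simpa [mul_comm, Function.comp_def] using (Real.hasDerivAt_cos (k * x / c)).comp x h

noncomputable def g1 (x : ℝ) : ℝ :=
  Θ * (-(5 / c * Real.cos (5 * x / c)) - 3 * (1 / c * Real.cos (1 * x / c))
      + 2 * (4 / c * Real.cos (4 * x / c)))

noncomputable def g2 (x : ℝ) : ℝ :=
  Θ * ((5 / c) ^ 2 * Real.sin (5 * x / c) + 3 * ((1 / c) ^ 2 * Real.sin (1 * x / c))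
      - 2 * ((4 / c) ^ 2 * Real.sin (4 * x / c)))

noncomputable def g3 (x : ℝ) : ℝ :=
  Θ * ((5 / c) ^ 3 * Real.cos (5 * x / c) + 3 * ((1 / c) ^ 3 * Real.cos (1 * x / c))
      - 2 * ((4 / c) ^ 3 * Real.cos (4 * x / c)))

lemma hφ2' (x : ℝ) : HasDerivAt φ2 (g1 x) x := by
  have h := ((((hasDerivAt_sin_k 5 x).neg.sub ((hasDerivAt_sin_k 1 x).const_mul 3)).add
      ((hasDerivAt_sin_k 4 x).const_mul 2)).const_mul Θ)
  have hfun : φ2 = fun y =>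
      Θ * (-Real.sin (5 * y / c) - 3 * Real.sin (1 * y / c) + 2 * Real.sin (4 * y / c)) := by
    funext y; simp [φ2, c, one_mul]
  rw [hfun, g1]
  exact h.congr_deriv (by ring)

lemma hg1' (x : ℝ) : HasDerivAt g1 (g2 x) x := by
  have h := ((((hasDerivAt_cos_k 5 x).const_mul (5 / c)).neg.sub
      (((hasDerivAt_cos_k 1 x).const_mul (1 / c)).const_mul 3)).add
      (((hasDerivAt_cos_k 4 x).const_mul (4 / c)).const_mul 2)).const_mul Θ
  have hfun : g1 = fun y =>
      Θ * (-(5 / c * Real.cos (5 * y / c)) - 3 * (1 / c * Real.cos (1 * y / c))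
        + 2 * (4 / c * Real.cos (4 * y / c))) := rfl
  rw [hfun, g2]
  exact h.congr_deriv (by ring)

lemma hg2' (x : ℝ) : HasDerivAt g2 (g3 x) x := by
  have h := ((((hasDerivAt_sin_k 5 x).const_mul ((5 / c) ^ 2)).add
      (((hasDerivAt_sin_k 1 x).const_mul ((1 / c) ^ 2)).const_mul 3)).sub
      (((hasDerivAt_sin_k 4 x).const_mul ((4 / c) ^ 2)).const_mul 2)).const_mul Θ
  have hfun : g2 = fun y =>
      Θ * ((5 / c) ^ 2 * Real.sin (5 * y / c) + 3 * ((1 / c) ^ 2 * Real.sin (1 * y / c))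
        - 2 * ((4 / c) ^ 2 * Real.sin (4 * y / c))) := rfl
  rw [hfun, g3]
  exact h.congr_deriv (by ring)

lemma deriv_φ2 : deriv φ2 = g1 := funext fun x => (hφ2' x).deriv

lemma iter3 : iteratedDeriv 3 φ2 = g3 := by
  rw [show (3 : ℕ) = 2 + 1 from rfl, iteratedDeriv_succ,
    show (2 : ℕ) = 1 + 1 from rfl, iteratedDeriv_succ, iteratedDeriv_one, deriv_φ2,
    funext fun x => (hg1' x).deriv, funext fun x => (hg2' x).deriv]

lemma main_eq (x : ℝ) : g1 x + g3 x = q * φ1 x := by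
  have h2 := hc2
  have h0 := hc0
  simp only [g1, g3, q, φ1, one_mul]
  have hx : x / c = 1 * x / c := by ring
  rw [show x / Real.sqrt 21 = 1 * x / c by simp [c],
    show 5 * x / Real.sqrt 21 = 5 * x / c by simp [c],
    show 4 * x / Real.sqrt 21 = 4 * x / c by simp [c],
    show Real.sqrt 21 = c from rfl]
  have h4 : c ^ 4 = 441 := by rw [show (4:ℕ) = 2 * 2 from rfl, pow_mul, h2]; norm_num
  have h6 : c ^ 6 = 9261 := by rw [show (6:ℕ) = 2 * 3 from rfl, pow_mul, h2]; norm_num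
  field_simp
  ring_nf
  rw [h2]
  ring

lemma contDiff_φ2 : ContDiff ℝ 3 φ2 := by
  have hs : ∀ k : ℝ, ContDiff ℝ 3 fun x => Real.sin (k * x / Real.sqrt 21) := fun k =>
    (Real.contDiff_sin.of_le le_top).comp ((contDiff_const.mul contDiff_id).div_const _)
  have hs1 : ContDiff ℝ 3 fun x : ℝ => Real.sin (x / Real.sqrt 21) :=
    (Real.contDiff_sin.of_le le_top).comp (contDiff_id.div_const _)
  exact contDiff_const.mul (((hs 5).neg.sub (contDiff_const.mul hs1)).add
    (contDiff_const.mul (hs 4)))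

end Stmt1Aux

/-- φ2 is C³ on [0,L] and satisfies φ2' + φ2''' = q·φ1 on [0,L],
with boundary conditions φ2(0) = φ2(L) = 0 and φ2'(0) = φ2'(L) = 0. -/
theorem stmt_1 :
    ContDiffOn ℝ 3 φ2 (Set.Icc 0 L) ∧
    (∀ x ∈ Set.Icc (0 : ℝ) L, deriv φ2 x + iteratedDeriv 3 φ2 x = q * φ1 x) ∧
    φ2 0 = 0 ∧ φ2 L = 0 ∧ deriv φ2 0 = 0 ∧ deriv φ2 L = 0 := by
  have hL : L / Stmt1Aux.c = 2 * Real.pi / 3 := by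
    have h1 : Real.sqrt (7 / 3) / Real.sqrt 21 = 1 / 3 := by
      rw [← Real.sqrt_div (by norm_num : (0:ℝ) ≤ 7/3) 21,
        show (7 / 3 : ℝ) / 21 = (1/3)^2 by norm_num, Real.sqrt_sq (by norm_num)]
    simp only [L, Stmt1Aux.c]
    rw [mul_div_assoc, h1]
    ring
  have hsin3 : Real.sin (Real.pi / 3) = Real.sqrt 3 / 2 := Real.sin_pi_div_three
  have hcos3 : Real.cos (Real.pi / 3) = 1 / 2 := Real.cos_pi_div_three
  have hs1 : Real.sin (5 * L / Stmt1Aux.c) = -(Real.sqrt 3 / 2) := by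
    rw [mul_div_assoc, hL, show 5 * (2 * Real.pi / 3) = Real.pi / 3 + Real.pi + 2 * Real.pi by ring,
      Real.sin_add_two_pi, Real.sin_add_pi, hsin3]
  have hs2 : Real.sin (L / Stmt1Aux.c) = Real.sqrt 3 / 2 := by
    rw [hL, show 2 * Real.pi / 3 = Real.pi - Real.pi / 3 by ring, Real.sin_pi_sub, hsin3]
  have hs3 : Real.sin (4 * L / Stmt1Aux.c) = Real.sqrt 3 / 2 := by
    rw [mul_div_assoc, hL, show 4 * (2 * Real.pi / 3) = (Real.pi - Real.pi / 3) + 2 * Real.pi by ring,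
      Real.sin_add_two_pi, Real.sin_pi_sub, hsin3]
  have hc1 : Real.cos (5 * L / Stmt1Aux.c) = -(1 / 2) := by
    rw [mul_div_assoc, hL, show 5 * (2 * Real.pi / 3) = Real.pi / 3 + Real.pi + 2 * Real.pi by ring,
      Real.cos_add_two_pi, Real.cos_add_pi, hcos3]
  have hc1' : Real.cos (L / Stmt1Aux.c) = -(1 / 2) := by
    rw [hL, show 2 * Real.pi / 3 = Real.pi - Real.pi / 3 by ring, Real.cos_pi_sub, hcos3]
  have hc4 : Real.cos (4 * L / Stmt1Aux.c) = -(1 / 2) := by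
    rw [mul_div_assoc, hL, show 4 * (2 * Real.pi / 3) = (Real.pi - Real.pi / 3) + 2 * Real.pi by ring,
      Real.cos_add_two_pi, Real.cos_pi_sub, hcos3]
  refine ⟨Stmt1Aux.contDiff_φ2.contDiffOn, ?_, ?_, ?_, ?_, ?_⟩
  · intro x _
    rw [Stmt1Aux.deriv_φ2, Stmt1Aux.iter3]
    exact Stmt1Aux.main_eq x
  · simp [φ2]
  · simp only [φ2, show Real.sqrt 21 = Stmt1Aux.c from rfl, hs1, hs3,
      show L / Stmt1Aux.c = L / Stmt1Aux.c from rfl]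
    rw [hs2]
    ring
  · rw [Stmt1Aux.deriv_φ2]
    simp only [Stmt1Aux.g1, mul_zero, zero_mul, zero_div, Real.cos_zero, mul_one, one_mul]
    ring
  · rw [Stmt1Aux.deriv_φ2]
    simp only [Stmt1Aux.g1, one_mul, hc1, hc1', hc4]
    ring
end

section
/- The complex-valued function φ := φ1 − i·φ2 on [0,L] is not identically zero, satisfies φ(0) = φ(L) = 0 and φ'(L) = 0, and satisfies −(φ'(x) + φ'''(x)) = (i·q)·φ(x) for all x ∈ [0,L]; likewise ψ := φ1 + i·φ2 is nonzero, satisfies the same boundary conditions, and satisfies −(ψ'(x) + ψ'''(x)) = (−i·q)·ψ(x) for all x ∈ [0,L]. In other words, ±i·q are eigenvalues of the operator φ ↦ −φ' − φ''' with these boundary conditions, with eigenfunctions φ1 ∓ i·φ2. -/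
noncomputable def φc (x : ℝ) : ℂ := (φ1 x : ℂ) - Complex.I * (φ2 x : ℂ)
noncomputable def ψc (x : ℝ) : ℂ := (φ1 x : ℂ) + Complex.I * (φ2 x : ℂ)

open Complex Real

noncomputable def aa : ℝ := (Real.sqrt 21)⁻¹

lemma hs_pos : (0:ℝ) < Real.sqrt 21 := Real.sqrt_pos.2 (by norm_num)
lemma hs_ne : Real.sqrt 21 ≠ 0 := ne_of_gt hs_pos
lemma hs2 : Real.sqrt 21 ^ 2 = 21 := Real.sq_sqrt (by norm_num)

noncomputable def gE (z : ℂ) (x : ℝ) : ℂ := Complex.exp (z * x)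

lemma gE_hasDerivAt (z : ℂ) (x : ℝ) : HasDerivAt (gE z) (z * gE z x) x := by
  have h : HasDerivAt (fun w : ℂ => Complex.exp (z * w)) (z * Complex.exp (z * x)) (x:ℂ) := by
    simpa [mul_comm] using ((hasDerivAt_id (x:ℂ)).const_mul z).cexp
  exact h.comp_ofReal

noncomputable def P (z1 z2 z3 c1 c2 c3 : ℂ) (x : ℝ) : ℂ :=
  c1 * gE z1 x + c2 * gE z2 x + c3 * gE z3 x

lemma P_hasDerivAt (z1 z2 z3 c1 c2 c3 : ℂ) (x : ℝ) :
    HasDerivAt (P z1 z2 z3 c1 c2 c3) (P z1 z2 z3 (c1*z1) (c2*z2) (c3*z3) x) x := by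
  have h := (((gE_hasDerivAt z1 x).const_mul c1).add ((gE_hasDerivAt z2 x).const_mul c2)).add
    ((gE_hasDerivAt z3 x).const_mul c3)
  unfold P
  simpa [P, Pi.add_def, mul_assoc, mul_comm, mul_left_comm] using h

lemma P_deriv (z1 z2 z3 c1 c2 c3 : ℂ) :
    deriv (P z1 z2 z3 c1 c2 c3) = P z1 z2 z3 (c1*z1) (c2*z2) (c3*z3) :=
  funext fun x => (P_hasDerivAt z1 z2 z3 c1 c2 c3 x).deriv

noncomputable def w1 : ℂ := (5 * aa : ℝ) * Complex.I
noncomputable def w2 : ℂ := (-aa : ℝ) * Complex.I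
noncomputable def w3 : ℂ := (-(4*aa) : ℝ) * Complex.I

lemma φc_eq : φc = P w1 w2 w3 (Θ:ℂ) (-3*Θ) (2*Θ) := by
  funext x
  have h5 : 5 * x / Real.sqrt 21 = 5 * aa * x := by rw [aa]; field_simp [aa]
  have h1 : x / Real.sqrt 21 = aa * x := by rw [aa]; field_simp [aa]
  have h4 : 4 * x / Real.sqrt 21 = 4 * aa * x := by rw [aa]; field_simp [aa]
  have e1 : gE w1 x = Complex.cos (5*aa*x : ℝ) + Complex.sin (5*aa*x : ℝ) * Complex.I := by
    rw [gE, show w1 * x = ((5*aa*x : ℝ) : ℂ) * Complex.I by rw [w1]; push_cast; ring,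
      Complex.exp_mul_I]
  have e2 : gE w2 x = Complex.cos (aa*x : ℝ) - Complex.sin (aa*x : ℝ) * Complex.I := by
    rw [gE, show w2 * x = ((-(aa*x) : ℝ) : ℂ) * Complex.I by rw [w2]; push_cast; ring,
      Complex.exp_mul_I]
    push_cast
    rw [Complex.cos_neg, Complex.sin_neg]; ring
  have e3 : gE w3 x = Complex.cos (4*aa*x : ℝ) - Complex.sin (4*aa*x : ℝ) * Complex.I := by
    rw [gE, show w3 * x = ((-(4*aa*x) : ℝ) : ℂ) * Complex.I by rw [w3]; push_cast; ring,
      Complex.exp_mul_I]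
    push_cast
    rw [Complex.cos_neg, Complex.sin_neg]; ring
  rw [P, e1, e2, e3, φc, φ1, φ2, h5, h1, h4]
  push_cast [Complex.ofReal_cos, Complex.ofReal_sin]
  ring

lemma ψc_eq : ψc = P (-w1) (-w2) (-w3) (Θ:ℂ) (-3*Θ) (2*Θ) := by
  funext x
  have h5 : 5 * x / Real.sqrt 21 = 5 * aa * x := by rw [aa]; field_simp [aa]
  have h1 : x / Real.sqrt 21 = aa * x := by rw [aa]; field_simp [aa]
  have h4 : 4 * x / Real.sqrt 21 = 4 * aa * x := by rw [aa]; field_simp [aa]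
  have e1 : gE (-w1) x = Complex.cos (5*aa*x : ℝ) - Complex.sin (5*aa*x : ℝ) * Complex.I := by
    rw [gE, show -w1 * x = ((-(5*aa*x) : ℝ) : ℂ) * Complex.I by rw [w1]; push_cast; ring,
      Complex.exp_mul_I]
    push_cast
    rw [Complex.cos_neg, Complex.sin_neg]; ring
  have e2 : gE (-w2) x = Complex.cos (aa*x : ℝ) + Complex.sin (aa*x : ℝ) * Complex.I := by
    rw [gE, show -w2 * x = ((aa*x : ℝ) : ℂ) * Complex.I by rw [w2]; push_cast; ring,
      Complex.exp_mul_I]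
  have e3 : gE (-w3) x = Complex.cos (4*aa*x : ℝ) + Complex.sin (4*aa*x : ℝ) * Complex.I := by
    rw [gE, show -w3 * x = ((4*aa*x : ℝ) : ℂ) * Complex.I by rw [w3]; push_cast; ring,
      Complex.exp_mul_I]
  rw [P, e1, e2, e3, ψc, φ1, φ2, h5, h1, h4]
  push_cast [Complex.ofReal_cos, Complex.ofReal_sin]
  ring

lemma h73 : Real.sqrt (7/3) = Real.sqrt 21 / 3 := by
  have h9 : Real.sqrt 9 = 3 := by
    rw [show (9:ℝ) = 3^2 by norm_num]; exact Real.sqrt_sq (by norm_num)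
  rw [show (7/3 : ℝ) = 21 / 9 by norm_num, Real.sqrt_div (by norm_num : (0:ℝ) ≤ 21), h9]

lemma haL : aa * L = 2 * Real.pi / 3 := by
  rw [aa, L, h73]
  field_simp

lemma hΘ : (0:ℝ) < Θ := by
  have hπ := Real.pi_pos
  unfold Θ
  positivity

lemma mode (k : ℝ) (hk : k^3 - k = q) :
    -(((k:ℂ) * Complex.I) + ((k:ℂ) * Complex.I)^3) = Complex.I * (q : ℂ) := by
  have hq : (q:ℂ) = (k:ℂ)^3 - (k:ℂ) := by push_cast [← hk]; ring
  rw [hq]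
  linear_combination (-(k:ℂ)^3 * Complex.I) * Complex.I_sq

lemma hk1 : (5*aa)^3 - 5*aa = q := by
  rw [q, aa]; have h2 := hs2; field_simp; nlinarith [hs_pos]

lemma hk2 : (-aa)^3 - (-aa) = q := by
  rw [q, aa]; have h2 := hs2; field_simp; nlinarith [hs_pos]

lemma hk3 : (-(4*aa))^3 - (-(4*aa)) = q := by
  rw [q, aa]; have h2 := hs2; field_simp; nlinarith [hs_pos]

lemma hw1 : -(w1 + w1^3) = Complex.I * (q : ℂ) := mode _ hk1
lemma hw2 : -(w2 + w2^3) = Complex.I * (q : ℂ) := mode _ hk2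
lemma hw3 : -(w3 + w3^3) = Complex.I * (q : ℂ) := mode _ hk3

lemma haLC : (aa:ℂ) * (L:ℂ) = 2*(Real.pi:ℂ)/3 := by
  have h : ((aa * L : ℝ) : ℂ) = ((2*Real.pi/3 : ℝ) : ℂ) := by rw [haL]
  push_cast at h
  linear_combination h

lemma hzero : w1 - 3*w2 + 2*w3 = 0 := by
  rw [w1, w2, w3]; push_cast; ring

lemma exp_shift (z : ℂ) (n : ℤ) : Complex.exp (z + n*(2*Real.pi*Complex.I)) = Complex.exp z := by
  rw [Complex.exp_add, Complex.exp_int_mul_two_pi_mul_I, mul_one]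

lemma e1L : gE w1 L = gE w2 L := by
  rw [gE, gE, show w1*(L:ℂ) = w2*(L:ℂ) + ((2:ℤ):ℂ)*(2*Real.pi*Complex.I) by
    rw [w1, w2]; push_cast; linear_combination (6*Complex.I) * haLC]
  exact exp_shift _ 2

lemma e3L : gE w3 L = gE w2 L := by
  rw [gE, gE, show w3*(L:ℂ) = w2*(L:ℂ) + ((-1:ℤ):ℂ)*(2*Real.pi*Complex.I) by
    rw [w3, w2]; push_cast; linear_combination (-3*Complex.I) * haLC]
  exact exp_shift _ (-1)

lemma e1L' : gE (-w1) L = gE (-w2) L := by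
  rw [gE, gE, show -w1*(L:ℂ) = -w2*(L:ℂ) + ((-2:ℤ):ℂ)*(2*Real.pi*Complex.I) by
    rw [w1, w2]; push_cast; linear_combination (-6*Complex.I) * haLC]
  exact exp_shift _ (-2)

lemma e3L' : gE (-w3) L = gE (-w2) L := by
  rw [gE, gE, show -w3*(L:ℂ) = -w2*(L:ℂ) + ((1:ℤ):ℂ)*(2*Real.pi*Complex.I) by
    rw [w3, w2]; push_cast; linear_combination (3*Complex.I) * haLC]
  exact exp_shift _ 1

noncomputable def x0 : ℝ := Real.sqrt 21 * (Real.pi/2)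

lemma x0_mem : x0 ∈ Set.Icc (0:ℝ) L := by
  constructor
  · rw [x0]; positivity
  · rw [x0, L, h73]
    nlinarith [Real.pi_pos, hs_pos]

lemma hφ2x0 : φ2 x0 = -4*Θ := by
  have h5 : 5 * x0 / Real.sqrt 21 = Real.pi/2 + 2*Real.pi := by
    rw [x0]; field_simp; ring
  have h1 : x0 / Real.sqrt 21 = Real.pi/2 := by
    rw [x0]; field_simp
  have h4 : 4 * x0 / Real.sqrt 21 = 2*Real.pi := by
    rw [x0]; field_simp; ring
  rw [φ2, h5, h1, h4, Real.sin_add_two_pi, Real.sin_pi_div_two, Real.sin_two_pi]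
  ring

/-- ±i·q are eigenvalues of φ ↦ −φ' − φ''' with the boundary conditions
φ(0) = φ(L) = 0, φ'(L) = 0, with eigenfunctions φ1 ∓ i·φ2. -/
theorem stmt_2 :
    (∃ x ∈ Set.Icc (0 : ℝ) L, φc x ≠ 0) ∧
    φc 0 = 0 ∧ φc L = 0 ∧ deriv φc L = 0 ∧
    (∀ x ∈ Set.Icc (0 : ℝ) L,
      -(deriv φc x + iteratedDeriv 3 φc x) = (Complex.I * (q : ℂ)) * φc x) ∧
    (∃ x ∈ Set.Icc (0 : ℝ) L, ψc x ≠ 0) ∧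
    ψc 0 = 0 ∧ ψc L = 0 ∧ deriv ψc L = 0 ∧
    (∀ x ∈ Set.Icc (0 : ℝ) L,
      -(deriv ψc x + iteratedDeriv 3 ψc x) = (-Complex.I * (q : ℂ)) * ψc x) := by
  have hd1 : deriv φc = P w1 w2 w3 ((Θ:ℂ)*w1) (-3*(Θ:ℂ)*w2) (2*(Θ:ℂ)*w3) := by
    rw [φc_eq, P_deriv]
  have hd3 : iteratedDeriv 3 φc
      = P w1 w2 w3 ((Θ:ℂ)*w1*w1*w1) (-3*(Θ:ℂ)*w2*w2*w2) (2*(Θ:ℂ)*w3*w3*w3) := by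
    rw [φc_eq]
    simp only [iteratedDeriv_succ, iteratedDeriv_zero, P_deriv]
  have hd1' : deriv ψc = P (-w1) (-w2) (-w3) ((Θ:ℂ)*(-w1)) (-3*(Θ:ℂ)*(-w2)) (2*(Θ:ℂ)*(-w3)) := by
    rw [ψc_eq, P_deriv]
  have hd3' : iteratedDeriv 3 ψc
      = P (-w1) (-w2) (-w3) ((Θ:ℂ)*(-w1)*(-w1)*(-w1)) (-3*(Θ:ℂ)*(-w2)*(-w2)*(-w2))
        (2*(Θ:ℂ)*(-w3)*(-w3)*(-w3)) := by
    rw [ψc_eq]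
    simp only [iteratedDeriv_succ, iteratedDeriv_zero, P_deriv]
  have hΘ' : (0:ℝ) < Θ := hΘ
  refine ⟨⟨x0, x0_mem, ?_⟩, ?_, ?_, ?_, ?_, ⟨x0, x0_mem, ?_⟩, ?_, ?_, ?_, ?_⟩
  · intro h
    have him := congrArg Complex.im h
    simp [φc] at him
    rw [hφ2x0] at him
    nlinarith
  · rw [φc_eq]; simp [P, gE]; ring
  · rw [φc_eq, P, e1L, e3L]; ring
  · rw [hd1, P, e1L, e3L]
    linear_combination ((Θ:ℂ) * gE w2 L) * hzero
  · intro x _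
    rw [hd1, hd3, φc_eq]
    simp only [P]
    linear_combination ((Θ:ℂ) * gE w1 x) * hw1 + (-3*(Θ:ℂ) * gE w2 x) * hw2
      + (2*(Θ:ℂ) * gE w3 x) * hw3
  · intro h
    have him := congrArg Complex.im h
    simp [ψc] at him
    rw [hφ2x0] at him
    nlinarith
  · rw [ψc_eq]; simp [P, gE]; ring
  · rw [ψc_eq, P, e1L', e3L']; ring
  · rw [hd1', P, e1L', e3L']
    linear_combination (-(Θ:ℂ) * gE (-w2) L) * hzero
  · intro x _
    rw [hd1', hd3', ψc_eq]
    simp only [P]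
    have hv1 : -((-w1) + (-w1)^3) = -Complex.I * (q:ℂ) := by linear_combination -hw1
    have hv2 : -((-w2) + (-w2)^3) = -Complex.I * (q:ℂ) := by linear_combination -hw2
    have hv3 : -((-w3) + (-w3)^3) = -Complex.I * (q:ℂ) := by linear_combination -hw3
    linear_combination ((Θ:ℂ) * gE (-w1) x) * hv1 + (-3*(Θ:ℂ) * gE (-w2) x) * hv2
      + (2*(Θ:ℂ) * gE (-w3) x) * hv3
end

section
/- Let λ ∈ ℂ and let φ : [0,L] → ℂ be a three times continuously differentiable function, not identically zero, satisfying −(φ'(x) + φ'''(x)) = λ·φ(x) for all x ∈ [0,L] together with the boundary conditions φ(0) = φ(L) = 0 and φ'(L) = 0. Then Re(λ)·∫₀^L |φ(x)|² dx = −(1/2)·|φ'(0)|², and in particular Re(λ) ≤ 0. -/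
open Set MeasureTheory Complex Function

lemma L_pos : 0 < L := by
  have h1 : (0:ℝ) < Real.sqrt (7/3) := Real.sqrt_pos.mpr (by norm_num)
  have h2 := Real.pi_pos
  unfold L
  positivity

lemma ftc_aux {u u' : ℝ → ℂ}
    (hu : ∀ x ∈ Set.Icc (0:ℝ) L, HasDerivWithinAt u (u' x) (Set.Icc 0 L) x)
    (hcu : ContinuousOn u (Set.Icc 0 L)) (hcu' : ContinuousOn u' (Set.Icc 0 L)) :
    ∫ x in (0:ℝ)..L, u' x = u L - u 0 := by
  apply intervalIntegral.integral_eq_sub_of_hasDeriv_right_of_le L_pos.le hcu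
  · intro x hx
    exact ((hu x (Set.Ioo_subset_Icc_self hx)).hasDerivAt
      (Icc_mem_nhds hx.1 hx.2)).hasDerivWithinAt
  · exact (((Set.uIcc_of_le L_pos.le).symm ▸ hcu')).intervalIntegrable

lemma intervalIntegrable_aux {v : ℝ → ℂ} (hv : ContinuousOn v (Set.Icc 0 L)) :
    IntervalIntegrable v volume 0 L :=
  (((Set.uIcc_of_le L_pos.le).symm ▸ hv)).intervalIntegrable

lemma intervalIntegral_conj {f : ℝ → ℂ} {a b : ℝ} :
    ∫ x in a..b, (starRingEnd ℂ) (f x) = (starRingEnd ℂ) (∫ x in a..b, f x) := by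
  simp [intervalIntegral, integral_conj, map_sub]

/-- if φ : [0,L] → ℂ is C³, not identically zero, satisfies
−(φ' + φ''') = λ·φ on [0,L] with φ(0) = φ(L) = 0 and φ'(L) = 0, then
Re(λ)·∫₀^L |φ|² = −(1/2)·|φ'(0)|², and in particular Re(λ) ≤ 0. -/
theorem stmt_6 (lam : ℂ) (φ : ℝ → ℂ)
    (hreg : ContDiffOn ℝ 3 φ (Set.Icc 0 L))
    (hne : ∃ x ∈ Set.Icc (0 : ℝ) L, φ x ≠ 0)
    (hode : ∀ x ∈ Set.Icc (0 : ℝ) L,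
      -(iteratedDerivWithin 1 φ (Set.Icc 0 L) x + iteratedDerivWithin 3 φ (Set.Icc 0 L) x)
        = lam * φ x)
    (h0 : φ 0 = 0) (hL : φ L = 0)
    (hL' : iteratedDerivWithin 1 φ (Set.Icc 0 L) L = 0) :
    lam.re * (∫ x in (0 : ℝ)..L, ‖φ x‖ ^ 2)
      = -(1 / 2) * ‖iteratedDerivWithin 1 φ (Set.Icc 0 L) 0‖ ^ 2 ∧
    lam.re ≤ 0 := by
  set S := Set.Icc (0:ℝ) L with hSdef
  have hS : UniqueDiffOn ℝ S := uniqueDiffOn_Icc L_pos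
  set f1 := iteratedDerivWithin 1 φ S with hf1def
  set f2 := iteratedDerivWithin 2 φ S with hf2def
  set f3 := iteratedDerivWithin 3 φ S with hf3def
  -- continuity
  have hc0 : ContinuousOn φ S := hreg.continuousOn
  have hc1 : ContinuousOn f1 S :=
    hreg.continuousOn_iteratedDerivWithin (by norm_num) hS
  have hc2 : ContinuousOn f2 S :=
    hreg.continuousOn_iteratedDerivWithin (by norm_num) hS
  have hc3 : ContinuousOn f3 S :=
    hreg.continuousOn_iteratedDerivWithin (by norm_num) hS
  -- derivatives
  have hsucc : ∀ (n : ℕ), ∀ x ∈ S, iteratedDerivWithin (n+1) φ S x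
      = derivWithin (iteratedDerivWithin n φ S) S x :=
    fun n x hx => by rw [iteratedDerivWithin_succ]
  have hd0 : ∀ x ∈ S, HasDerivWithinAt φ (f1 x) S x := by
    intro x hx
    have h := (hreg.differentiableOn (by norm_num) x hx).hasDerivWithinAt
    rwa [← iteratedDerivWithin_one] at h
  have hd1 : ∀ x ∈ S, HasDerivWithinAt f1 (f2 x) S x := by
    intro x hx
    have h := ((hreg.differentiableOn_iteratedDerivWithin (m := 1) (by norm_num) hS)
      x hx).hasDerivWithinAt
    rw [hf2def, show (2:ℕ) = 1 + 1 from rfl, hsucc 1 x hx]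
    exact h
  have hd2 : ∀ x ∈ S, HasDerivWithinAt f2 (f3 x) S x := by
    intro x hx
    have h := ((hreg.differentiableOn_iteratedDerivWithin (m := 2) (by norm_num) hS)
      x hx).hasDerivWithinAt
    rw [hf3def, show (3:ℕ) = 2 + 1 from rfl, hsucc 2 x hx]
    exact h
  -- the three FTC identities
  have I1 : (∫ x in (0:ℝ)..L, (star (f1 x) * φ x + star (φ x) * f1 x)) = 0 := by
    have h := ftc_aux (u := fun y => star (φ y) * φ y)
      (u' := fun x => star (f1 x) * φ x + star (φ x) * f1 x)
      (fun x hx => ((hd0 x hx).star.mul (hd0 x hx)))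
      (hc0.star.mul hc0) ((hc1.star.mul hc0).add (hc0.star.mul hc1))
    rw [h]
    simp [h0, hL]
  have I2 : (∫ x in (0:ℝ)..L, (star (f2 x) * f1 x + star (f1 x) * f2 x))
      = -(Complex.normSq (f1 0) : ℂ) := by
    have h := ftc_aux (u := fun y => star (f1 y) * f1 y)
      (u' := fun x => star (f2 x) * f1 x + star (f1 x) * f2 x)
      (fun x hx => ((hd1 x hx).star.mul (hd1 x hx)))
      (hc1.star.mul hc1) ((hc2.star.mul hc1).add (hc1.star.mul hc2))
    rw [h]
    simp only [hL', star_zero, zero_mul, zero_sub, neg_inj]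
    rw [Complex.star_def, mul_comm]
    exact Complex.mul_conj _
  have I3 : (∫ x in (0:ℝ)..L, (star (f1 x) * f2 x + star (φ x) * f3 x)) = 0 := by
    have h := ftc_aux (u := fun y => star (φ y) * f2 y)
      (u' := fun x => star (f1 x) * f2 x + star (φ x) * f3 x)
      (fun x hx => ((hd0 x hx).star.mul (hd2 x hx)))
      (hc0.star.mul hc2) ((hc1.star.mul hc2).add (hc0.star.mul hc3))
    rw [h]
    simp [h0, hL]
  -- integrability of the pieces
  have int1 : IntervalIntegrable (fun x => star (φ x) * f1 x) volume 0 L :=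
    intervalIntegrable_aux (hc0.star.mul hc1)
  have int1' : IntervalIntegrable (fun x => star (f1 x) * φ x) volume 0 L :=
    intervalIntegrable_aux (hc1.star.mul hc0)
  have int2 : IntervalIntegrable (fun x => star (f1 x) * f2 x) volume 0 L :=
    intervalIntegrable_aux (hc1.star.mul hc2)
  have int2' : IntervalIntegrable (fun x => star (f2 x) * f1 x) volume 0 L :=
    intervalIntegrable_aux (hc2.star.mul hc1)
  have int3 : IntervalIntegrable (fun x => star (φ x) * f3 x) volume 0 L :=
    intervalIntegrable_aux (hc0.star.mul hc3)
  set A := ∫ x in (0:ℝ)..L, star (φ x) * f1 x with hA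
  set B := ∫ x in (0:ℝ)..L, star (f1 x) * f2 x with hB
  set C := ∫ x in (0:ℝ)..L, star (φ x) * f3 x with hC
  -- A.re = 0
  have hAre : A.re = 0 := by
    have h1 : (∫ x in (0:ℝ)..L, star (f1 x) * φ x) = star A := by
      rw [hA, Complex.star_def, ← intervalIntegral_conj]
      congr 1; funext x
      simp [mul_comm]
    rw [intervalIntegral.integral_add int1' int1, h1, ← hA] at I1
    have h2 := congrArg Complex.re I1
    simp only [Complex.add_re, Complex.star_def, Complex.conj_re, Complex.zero_re] at h2
    linarith
  -- B.re
  have hBre : B.re = -(Complex.normSq (f1 0)) / 2 := by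
    have h1 : (∫ x in (0:ℝ)..L, star (f2 x) * f1 x) = star B := by
      rw [hB, Complex.star_def, ← intervalIntegral_conj]
      congr 1; funext x
      simp [mul_comm]
    rw [intervalIntegral.integral_add int2' int2, h1, ← hB] at I2
    have h2 := congrArg Complex.re I2
    simp only [Complex.add_re, Complex.star_def, Complex.conj_re, Complex.neg_re,
      Complex.ofReal_re] at h2
    linarith
  -- C.re
  have hCre : C.re = Complex.normSq (f1 0) / 2 := by
    rw [intervalIntegral.integral_add int2 int3, ← hB, ← hC] at I3
    have hCB : C = -B := by linear_combination I3
    rw [hCB, Complex.neg_re, hBre]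
    ring
  -- the ODE identity, integrated
  set m := ∫ x in (0:ℝ)..L, ‖φ x‖ ^ 2 with hm
  have hodeint : A + C = -(lam * (m : ℂ)) := by
    have e1 : (∫ x in (0:ℝ)..L, (star (φ x) * f1 x + star (φ x) * f3 x))
        = ∫ x in (0:ℝ)..L, -(lam * ((‖φ x‖ ^ 2 : ℝ) : ℂ)) := by
      apply intervalIntegral.integral_congr
      intro x hx
      rw [Set.uIcc_of_le L_pos.le] at hx
      have := hode x hx
      have hφs : star (φ x) * φ x = ((‖φ x‖ ^ 2 : ℝ) : ℂ) := by
        rw [Complex.star_def, mul_comm, Complex.mul_conj, Complex.normSq_eq_norm_sq]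
      calc star (φ x) * f1 x + star (φ x) * f3 x
          = star (φ x) * (f1 x + f3 x) := by ring
        _ = -(star (φ x) * (-(f1 x + f3 x))) := by ring
        _ = -(star (φ x) * (lam * φ x)) := by rw [this]
        _ = -(lam * (star (φ x) * φ x)) := by ring
        _ = -(lam * ((‖φ x‖ ^ 2 : ℝ) : ℂ)) := by rw [hφs]
    rw [← intervalIntegral.integral_add int1 int3, e1]
    rw [intervalIntegral.integral_neg, intervalIntegral.integral_const_mul,
      intervalIntegral.integral_ofReal]
  -- take real parts
  have habs : Complex.normSq (f1 0) = ‖f1 0‖ ^ 2 := (Complex.sq_norm _).symm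
  have main : lam.re * m = -(1/2) * ‖f1 0‖ ^ 2 := by
    have := congrArg Complex.re hodeint
    simp only [Complex.add_re, Complex.neg_re, Complex.mul_re, Complex.ofReal_re,
      Complex.ofReal_im, mul_zero, sub_zero] at this
    rw [hAre, hCre, habs] at this
    linarith
  refine ⟨main, ?_⟩
  -- positivity of m
  have hmpos : 0 < m := by
    obtain ⟨x₀, hx₀, hφx₀⟩ := hne
    have hx0i : x₀ ∈ Set.Ioo (0:ℝ) L := by
      constructor
      · exact hx₀.1.lt_of_ne (fun e => hφx₀ (by rw [← e]; exact h0))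
      · exact hx₀.2.lt_of_ne (fun e => hφx₀ (by rw [e]; exact hL))
    have hca : ContinuousAt φ x₀ := hc0.continuousAt (Icc_mem_nhds hx0i.1 hx0i.2)
    have ev : ∀ᶠ y in nhds x₀, φ y ≠ 0 ∧ y ∈ Set.Ioo (0:ℝ) L :=
      (hca.eventually_ne hφx₀).and
        (Filter.eventually_of_mem (Ioo_mem_nhds hx0i.1 hx0i.2) (fun y hy => hy))
    obtain ⟨ε, hε, hball⟩ := Metric.eventually_nhds_iff.mp ev
    have hsub : Set.Ioo (x₀ - ε) (x₀ + ε)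
        ⊆ Function.support (fun x => ‖φ x‖ ^ 2) ∩ Set.Ioc 0 L := by
      intro y hy
      have hd : dist y x₀ < ε := by
        rw [Real.dist_eq, abs_sub_lt_iff]
        constructor <;> [linarith [hy.2]; linarith [hy.1]]
      obtain ⟨hne', hIoo⟩ := hball hd
      refine ⟨?_, Set.Ioo_subset_Ioc_self hIoo⟩
      simp only [Function.mem_support]
      exact pow_ne_zero 2 (norm_ne_zero_iff.mpr hne')
    have hint : IntervalIntegrable (fun x => ‖φ x‖ ^ 2) volume 0 L := by
      apply ContinuousOn.intervalIntegrable
      rw [Set.uIcc_of_le L_pos.le]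
      exact (continuous_norm.comp_continuousOn hc0).pow 2
    rw [hm, intervalIntegral.integral_pos_iff_support_of_nonneg_ae
      (Filter.Eventually.of_forall (fun x => by positivity)) hint]
    refine ⟨L_pos, lt_of_lt_of_le ?_ (measure_mono hsub)⟩
    rw [Real.volume_Ioo]
    apply ENNReal.ofReal_pos.mpr
    linarith
  by_contra hlt
  push_neg at hlt
  have h1 : 0 < lam.re * m := mul_pos hlt hmpos
  have h2 : lam.re * m ≤ 0 := by
    rw [main]
    have : (0:ℝ) ≤ ‖f1 0‖ ^ 2 := by positivity
    linarith
  linarith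
end

section
/- If h : [0,L] → ℝ is three times continuously differentiable and satisfies h'(x) + h'''(x) = 0 for all x ∈ [0,L] together with the boundary conditions h(0) = h(L) = 0 and h'(L) = 0, then h is identically zero. That is, 0 is not an eigenvalue of the operator φ ↦ −φ' − φ''' with these boundary conditions. -/
/-- 0 is not an eigenvalue of φ ↦ −φ' − φ''' with boundary conditions
φ(0) = φ(L) = 0, φ'(L) = 0: any C³ solution of h' + h''' = 0 on [0,L] with these
boundary conditions vanishes identically on [0,L]. -/
theorem stmt_8 (h : ℝ → ℝ)
    (hreg : ContDiffOn ℝ 3 h (Set.Icc 0 L))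
    (hode : ∀ x ∈ Set.Icc (0 : ℝ) L,
      iteratedDerivWithin 1 h (Set.Icc 0 L) x + iteratedDerivWithin 3 h (Set.Icc 0 L) x = 0)
    (h0 : h 0 = 0) (hL : h L = 0)
    (hL' : iteratedDerivWithin 1 h (Set.Icc 0 L) L = 0) :
    ∀ x ∈ Set.Icc (0 : ℝ) L, h x = 0 := by
  have hπ := Real.pi_pos
  have hsq : (0:ℝ) < Real.sqrt (7/3) := Real.sqrt_pos.2 (by norm_num)
  have hLpos : (0:ℝ) < L := by unfold L; positivity
  set s : Set ℝ := Set.Icc 0 L with hs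
  have husd : UniqueDiffOn ℝ s := uniqueDiffOn_Icc hLpos
  have h0s : (0:ℝ) ∈ s := Set.mem_Icc.2 ⟨le_refl 0, hLpos.le⟩
  have hLs : L ∈ s := Set.mem_Icc.2 ⟨hLpos.le, le_refl L⟩
  set u : ℝ → ℝ := derivWithin h s with hu
  set u' : ℝ → ℝ := derivWithin u s with hu'
  have hu2 : ContDiffOn ℝ 2 u s := hreg.derivWithin husd (by norm_num)
  have hu'1 : ContDiffOn ℝ 1 u' s := hu2.derivWithin husd (by norm_num)
  have hd_h : ∀ x ∈ s, HasDerivWithinAt h (u x) s x := fun x hx =>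
    ((hreg.differentiableOn (by norm_num)) x hx).hasDerivWithinAt
  have hd_u : ∀ x ∈ s, HasDerivWithinAt u (u' x) s x := fun x hx =>
    ((hu2.differentiableOn (by norm_num)) x hx).hasDerivWithinAt
  -- identify iterated derivatives
  have e1 : Set.EqOn (iteratedDerivWithin 1 h s) u s := fun x hx =>
    congrFun iteratedDerivWithin_one x
  have e2 : Set.EqOn (iteratedDerivWithin 2 h s) u' s := by
    intro x hx
    rw [show (2:ℕ) = 1 + 1 from rfl, iteratedDerivWithin_succ]
    exact derivWithin_congr e1 (e1 hx)
  have e3 : ∀ x ∈ s, iteratedDerivWithin 3 h s x = derivWithin u' s x := by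
    intro x hx
    rw [show (3:ℕ) = 2 + 1 from rfl, iteratedDerivWithin_succ]
    exact derivWithin_congr e2 (e2 hx)
  have hd_u' : ∀ x ∈ s, HasDerivWithinAt u' (-(u x)) s x := by
    intro x hx
    have hode' := hode x hx
    rw [e1 hx, e3 x hx] at hode'
    have hdiff := (hu'1.differentiableOn (by norm_num)) x hx
    have := hdiff.hasDerivWithinAt
    rwa [show derivWithin u' s x = -(u x) by linarith] at this
  set a : ℝ := u 0 with ha
  set b : ℝ := u' 0 with hb
  -- energy argument: u x = a cos x + b sin x on s
  set W : ℝ → ℝ := fun x => u x - (a * Real.cos x + b * Real.sin x) with hW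
  set W1 : ℝ → ℝ := fun x => u' x - (-(a * Real.sin x) + b * Real.cos x) with hW1
  have hdW : ∀ x ∈ s, HasDerivWithinAt W (W1 x) s x := by
    intro x hx
    have ht : HasDerivAt (fun x => a * Real.cos x + b * Real.sin x)
        (-(a * Real.sin x) + b * Real.cos x) x := by
      have := ((Real.hasDerivAt_cos x).const_mul a).add ((Real.hasDerivAt_sin x).const_mul b)
      exact this.congr_deriv (by ring)
    exact (hd_u x hx).sub ht.hasDerivWithinAt
  have hdW1 : ∀ x ∈ s, HasDerivWithinAt W1 (-(W x)) s x := by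
    intro x hx
    have ht : HasDerivAt (fun x => -(a * Real.sin x) + b * Real.cos x)
        (-(a * Real.cos x + b * Real.sin x)) x := by
      have := (((Real.hasDerivAt_sin x).const_mul a).neg).add
        ((Real.hasDerivAt_cos x).const_mul b)
      exact this.congr_deriv (by ring)
    have := (hd_u' x hx).sub ht.hasDerivWithinAt
    exact this.congr_deriv (by simp [hW]; ring)
  set E : ℝ → ℝ := fun x => W x * W x + W1 x * W1 x with hE
  have hdE : ∀ x ∈ s, HasDerivWithinAt E 0 s x := by
    intro x hx
    have := ((hdW x hx).mul (hdW x hx)).add ((hdW1 x hx).mul (hdW1 x hx))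
    exact this.congr_deriv (by ring)
  have hEconst : ∀ x ∈ s, E x = E 0 := by
    apply constant_of_derivWithin_zero
    · exact fun x hx => (hdE x hx).differentiableWithinAt
    · intro x hx
      exact (hdE x ⟨hx.1, hx.2.le⟩).derivWithin (husd x ⟨hx.1, hx.2.le⟩)
  have hE0 : E 0 = 0 := by
    simp [hE, hW, hW1, ← ha, ← hb, Real.cos_zero, Real.sin_zero]
  have huform : ∀ x ∈ s, u x = a * Real.cos x + b * Real.sin x := by
    intro x hx
    have hEx : E x = 0 := (hEconst x hx).trans hE0
    simp only [hE] at hEx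
    have : W x = 0 := by nlinarith [mul_self_nonneg (W x), mul_self_nonneg (W1 x)]
    have := this
    simp only [hW] at this
    linarith
  -- integrate once more: h x = a sin x + b (1 - cos x)
  set G : ℝ → ℝ := fun x => h x - (a * Real.sin x + b * (1 - Real.cos x)) with hG
  have hdG : ∀ x ∈ s, HasDerivWithinAt G 0 s x := by
    intro x hx
    have ht : HasDerivAt (fun x => a * Real.sin x + b * (1 - Real.cos x))
        (a * Real.cos x + b * Real.sin x) x := by
      have := ((Real.hasDerivAt_sin x).const_mul a).add
        ((((Real.hasDerivAt_cos x).const_sub 1)).const_mul b)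
      exact this.congr_deriv (by ring)
    have := (hd_h x hx).sub ht.hasDerivWithinAt
    rwa [huform x hx, sub_self] at this
  have hGconst : ∀ x ∈ s, G x = G 0 := by
    apply constant_of_derivWithin_zero
    · exact fun x hx => (hdG x hx).differentiableWithinAt
    · intro x hx
      exact (hdG x ⟨hx.1, hx.2.le⟩).derivWithin (husd x ⟨hx.1, hx.2.le⟩)
  have hG0 : G 0 = 0 := by simp [hG, h0]
  have hform : ∀ x ∈ s, h x = a * Real.sin x + b * (1 - Real.cos x) := by
    intro x hx
    have := (hGconst x hx).trans hG0
    simp only [hG] at this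
    linarith
  -- boundary conditions
  have eq1 : a * Real.sin L + b * (1 - Real.cos L) = 0 := by
    have := hform L hLs; rw [hL] at this; linarith
  have huL : u L = 0 := by rw [← e1 hLs]; exact hL'
  have eq2 : a * Real.cos L + b * Real.sin L = 0 := by
    have := huform L hLs; rw [huL] at this; linarith
  -- cos L ≠ 1
  have hcos : Real.cos L ≠ 1 := by
    intro hc
    obtain ⟨n, hn⟩ := (Real.cos_eq_one_iff L).1 hc
    have hn' : (n:ℝ) * (2 * Real.pi) = 2 * Real.pi * Real.sqrt (7/3) := by
      rw [hn]; rfl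
    have hsqrt : Real.sqrt (7/3) = (n:ℝ) := by
      have h2 : (2 * Real.pi) ≠ 0 := by positivity
      exact (mul_left_cancel₀ h2 (by linarith)).symm
    have hsq2 : ((n:ℝ))^2 = 7/3 := by
      rw [← hsqrt, Real.sq_sqrt (by norm_num : (7:ℝ)/3 ≥ 0)]
    have h3 : (3:ℝ) * (n:ℝ)^2 = 7 := by rw [hsq2]; ring
    have h3' : (3:ℤ) * n^2 = 7 := by exact_mod_cast h3
    have hnn : (0:ℤ) ≤ n^2 := sq_nonneg n
    omega
  -- solve the linear system
  have hident := Real.sin_sq_add_cos_sq L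
  have hbz : b = 0 := by
    have key : b * (1 - Real.cos L) = 0 := by
      linear_combination Real.sin L * eq2 - Real.cos L * eq1 - b * hident
    rcases mul_eq_zero.1 key with h' | h'
    · exact h'
    · exact absurd (by linarith : Real.cos L = 1) hcos
  have haz : a = 0 := by
    rw [hbz] at eq1 eq2
    linear_combination Real.sin L * eq1 + Real.cos L * eq2 - a * hident
  intro x hx
  rw [hform x hx, haz, hbz]
  ring
end
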